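/- For every m ≥ 1, λ_0^(m,a)·λ_1^(m,a)/h^(m,a) < 1/(2·t_{n-1}), where h^(m,a) is the sum of the λ_i^(m,a) for i = 0,…,n. -/

import Mathlib

theorem lambda_height_bound
    (n a : ℕ) (hn : 4 ≤ n) (ha : a ≤ n - 2)
    (y : ℕ → ℕ)
    (hy0 : y 0 = 2)
    (hy : ∀ m, 1 ≤ m → y m = 1 + ∏ i ∈ Finset.range m, y i)
    (k : ℕ → ℕ)
    (hk : Set.BijOn k (Set.Icc 3 n) (Set.Iic (n - 2) \ {a}))
    (L : ℕ → ℕ → ℚ)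
    (hL00 : L 0 0 = 1)
    (hL01 : L 0 1 = 2 * ((y (n - 1) : ℚ) - 1) / (y a : ℚ))
    (hL02 : L 0 2 = 1)
    (hL0i : ∀ i, 3 ≤ i → i ≤ n → L 0 i = 2 * ((y (n - 1) : ℚ) - 1) / (y (k i) : ℚ))
    (hR0 : ∀ m, L (m + 1) 0 = L m 2)
    (hR1 : ∀ m, L (m + 1) 1 = L m 1)
    (hR2 : ∀ m, L (m + 1) 2 = (L m 1 + L m 2) ^ 2 / L m 0)
    (hRi : ∀ m i, 3 ≤ i → i ≤ n → L (m + 1) i = L m i * (L m 1 + L m 2) / L m 0)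
    : ∀ m, 1 ≤ m →
      L m 0 * L m 1 / (∑ i ∈ Finset.range (n + 1), L m i) <
        1 / (2 * ((y (n - 1) : ℚ) - 1)) := by
  -- y m ≥ 2 for all m
  have yge2 : ∀ m, 2 ≤ y m := by
    intro m
    induction m using Nat.strong_induction_on with
    | _ m ih =>
      match m with
      | 0 => omega
      | Nat.succ m =>
        rw [hy (m + 1) (by omega)]
        have h2 : y 0 ≤ ∏ i ∈ Finset.range (m + 1), y i := by
          apply Finset.single_le_prod'
          · intro i hi
            have := ih i (Finset.mem_range.mp hi)
            omega
          · exact Finset.mem_range.mpr (by omega)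
        omega
  have yQpos : ∀ m, (0 : ℚ) < (y m : ℚ) := by
    intro m
    exact_mod_cast Nat.lt_of_lt_of_le (by norm_num) (yge2 m)
  set t : ℚ := (y (n - 1) : ℚ) - 1 with ht_def
  -- products
  set p : ℕ → ℚ := fun m => ∏ i ∈ Finset.range m, (y i : ℚ) with hp_def
  have ppos : ∀ m, 0 < p m := by
    intro m
    exact Finset.prod_pos fun i _ => yQpos i
  have hyp : ∀ m, 1 ≤ m → (y m : ℚ) = 1 + p m := by
    intro m hm
    rw [hy m hm]
    push_cast
    ring
  have ht : t = p (n - 1) := by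
    rw [ht_def, hyp (n - 1) (by omega)]
    ring
  have tpos : 0 < t := ht ▸ ppos (n - 1)
  -- Sylvester identity
  have syl : ∀ m, 1 ≤ m →
      ∑ j ∈ Finset.range m, (1 : ℚ) / (y j : ℚ) = 1 - 1 / p m := by
    intro m hm
    induction m, hm using Nat.le_induction with
    | base =>
      simp [hp_def, hy0]
      norm_num
    | succ m hm ih =>
      rw [Finset.sum_range_succ, ih, hyp m hm]
      have hpm : p (m + 1) = p m * (1 + p m) := by
        rw [hp_def]
        simp only
        rw [Finset.prod_range_succ, hyp m hm]
      rw [hpm]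
      have h1 : p m ≠ 0 := (ppos m).ne'
      have h2 : (1 : ℚ) + p m ≠ 0 := by positivity
      field_simp
      ring
  -- the index bijection for the sum
  have hbij : ∀ f : ℕ → ℚ,
      ∑ i ∈ Finset.Icc 3 n, f (k i) = ∑ j ∈ (Finset.Iic (n - 2)).erase a, f j := by
    intro f
    apply Finset.sum_bij (fun i _ => k i)
    · intro i hi
      have hi' : i ∈ Set.Icc 3 n := by
        rw [Finset.mem_Icc] at hi
        exact hi
      have := hk.mapsTo hi'
      simp only [Set.mem_diff, Set.mem_Iic, Set.mem_singleton_iff] at this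
      simp only [Finset.mem_erase, Finset.mem_Iic]
      exact ⟨this.2, this.1⟩
    · intro i hi j hj hij
      apply hk.injOn _ _ hij
      · rw [Finset.mem_Icc] at hi; exact hi
      · rw [Finset.mem_Icc] at hj; exact hj
    · intro b hb
      have hb' : b ∈ Set.Iic (n - 2) \ {a} := by
        simp only [Finset.mem_erase, Finset.mem_Iic] at hb
        simp only [Set.mem_diff, Set.mem_Iic, Set.mem_singleton_iff]
        exact ⟨hb.2, hb.1⟩
      obtain ⟨i, hi, hki⟩ := hk.surjOn hb'
      exact ⟨i, Finset.mem_Icc.mpr hi, hki⟩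
    · intro i _
      rfl
  have hIic : Finset.Iic (n - 2) = Finset.range (n - 1) := by
    ext x
    simp only [Finset.mem_Iic, Finset.mem_range]
    omega
  have hsumk : ∑ i ∈ Finset.Icc 3 n, (1 : ℚ) / (y (k i) : ℚ)
      = (1 - 1 / t) - 1 / (y a : ℚ) := by
    rw [hbij (fun j => (1 : ℚ) / (y j : ℚ))]
    have hmem : a ∈ Finset.Iic (n - 2) := Finset.mem_Iic.mpr ha
    have := Finset.sum_erase_add (Finset.Iic (n - 2)) (fun j => (1 : ℚ) / (y j : ℚ)) hmem
    have hS : ∑ j ∈ Finset.Iic (n - 2), (1 : ℚ) / (y j : ℚ) = 1 - 1 / t := by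
      rw [hIic, syl (n - 1) (by omega), ht]
    rw [hS] at this
    linarith
  -- the height function
  set H : ℕ → ℚ := fun m => ∑ i ∈ Finset.range (n + 1), L m i with hH_def
  have hsplit : ∀ m, H m = L m 0 + L m 1 + L m 2 + ∑ i ∈ Finset.Icc 3 n, L m i := by
    intro m
    rw [hH_def]
    simp only
    rw [Finset.range_eq_Ico, ← Finset.sum_Ico_consecutive _ (by omega : 0 ≤ 3)
      (by omega : 3 ≤ n + 1), Finset.Ico_add_one_right_eq_Icc,
      (by decide : (Finset.Ico 0 3 : Finset ℕ) = Finset.Icc 0 2)]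
    have h3 : (Finset.Icc 0 2 : Finset ℕ) = insert 0 (insert 1 {2}) := by decide
    rw [h3, Finset.sum_insert (by decide), Finset.sum_insert (by decide),
      Finset.sum_singleton]
    ring
  -- H 0 = 2t
  have hH0 : H 0 = 2 * t := by
    rw [hsplit 0, hL00, hL01, hL02]
    have hsum : ∑ i ∈ Finset.Icc 3 n, L 0 i
        = 2 * t * ((1 - 1 / t) - 1 / (y a : ℚ)) := by
      rw [← hsumk, Finset.mul_sum]
      apply Finset.sum_congr rfl
      intro i hi
      rw [Finset.mem_Icc] at hi
      rw [hL0i i hi.1 hi.2]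
      ring
    rw [hsum]
    have h1 : (y a : ℚ) ≠ 0 := (yQpos a).ne'
    have h2 : t ≠ 0 := tpos.ne'
    field_simp
    ring
  -- positivity of all L m i for i ≤ n
  have Lpos : ∀ m, ∀ i, i ≤ n → 0 < L m i := by
    intro m
    induction m with
    | zero =>
      intro i hi
      match i with
      | 0 => rw [hL00]; norm_num
      | 1 => rw [hL01]; exact div_pos (by linarith) (yQpos a)
      | 2 => rw [hL02]; norm_num
      | (j + 3) =>
        rw [hL0i (j + 3) (by omega) hi]
        exact div_pos (by linarith) (yQpos (k (j + 3)))
    | succ m ih =>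
      intro i hi
      have h0 := ih 0 (by omega)
      have h1 := ih 1 (by omega)
      have h2 := ih 2 (by omega)
      match i with
      | 0 => rw [hR0]; exact h2
      | 1 => rw [hR1]; exact h1
      | 2 => rw [hR2]; exact div_pos (pow_pos (by linarith) 2) h0
      | (j + 3) =>
        rw [hRi m (j + 3) (by omega) hi]
        have := ih (j + 3) hi
        exact div_pos (mul_pos this (by linarith)) h0
  -- H recursion
  have hHrec : ∀ m, H (m + 1) = (L m 1 + L m 2) / L m 0 * H m := by
    intro m
    have h0 := Lpos m 0 (by omega)
    have h1 := Lpos m 1 (by omega)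
    have h2 := Lpos m 2 (by omega)
    rw [hsplit (m + 1), hsplit m, hR0, hR1, hR2]
    have hsum : ∑ i ∈ Finset.Icc 3 n, L (m + 1) i
        = (∑ i ∈ Finset.Icc 3 n, L m i) * ((L m 1 + L m 2) / L m 0) := by
      rw [Finset.sum_mul]
      apply Finset.sum_congr rfl
      intro i hi
      rw [Finset.mem_Icc] at hi
      rw [hRi m i hi.1 hi.2, mul_div_assoc]
    rw [hsum]
    have h0' : L m 0 ≠ 0 := h0.ne'
    field_simp
    ring
  have Hpos : ∀ m, 0 < H m := by
    intro m
    rw [hH_def]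
    apply Finset.sum_pos
    · intro i hi
      exact Lpos m i (by rw [Finset.mem_range] at hi; omega)
    · exact ⟨0, Finset.mem_range.mpr (by omega)⟩
  -- main induction
  intro m hm
  show L m 0 * L m 1 / H m < 1 / (2 * t)
  induction m, hm using Nat.le_induction with
  | base =>
    rw [hR0, hR1, hHrec 0, hH0, hL00, hL01, hL02]
    set b : ℚ := 2 * t / (y a : ℚ) with hb_def
    have hb : 0 < b := div_pos (by linarith) (yQpos a)
    rw [div_lt_div_iff₀ (by nlinarith) (by nlinarith)]
    have : (b + 1) / 1 = b + 1 := by ring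
    rw [this]
    nlinarith [tpos]
  | succ m hm ih =>
    have h0 := Lpos m 0 (by omega)
    have h1 := Lpos m 1 (by omega)
    have h2 := Lpos m 2 (by omega)
    have hHm := Hpos m
    have key : L (m + 1) 0 * L (m + 1) 1 / H (m + 1)
        = (L m 0 * L m 1 / H m) * (L m 2 / (L m 1 + L m 2)) := by
      rw [hR0, hR1, hHrec m]
      have h12 : L m 1 + L m 2 ≠ 0 := by linarith
      field_simp
    rw [key]
    have hr : 0 < L m 0 * L m 1 / H m := div_pos (mul_pos h0 h1) hHm
    have hf : L m 2 / (L m 1 + L m 2) < 1 := by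
      rw [div_lt_one (by linarith)]
      linarith
    calc (L m 0 * L m 1 / H m) * (L m 2 / (L m 1 + L m 2))
        < (L m 0 * L m 1 / H m) * 1 := by
          apply mul_lt_mul_of_pos_left hf hr
      _ = L m 0 * L m 1 / H m := by ring
      _ < 1 / (2 * t) := ih
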